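/- Let G be a 3-uniform hypergraph on {1,…,n} and let ω = exp(2π√(−1)/3). Suppose x ∈ ℂ^n satisfies x_i ∈ {1, ω, ω²} for every i. Then ((D−A) x²)_i = 0 for all i if and only if for every edge e = {a,b,c} ∈ E either x_a = x_b = x_c or the three values x_a, x_b, x_c are pairwise distinct (equivalently, x_a·x_b·x_c = 1 for every edge). -/
import Mathlib


open Finset

/-- Degree of vertex `i` in the hypergraph with edge set `E`. -/
def hdeg {n : ℕ} (E : Finset (Finset (Fin n))) (i : Fin n) : ℕ :=
  (E.filter fun e => i ∈ e).card

/-- Laplacian tensor action `((D - A) x^{k-1})_i` over ℂ. -/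
noncomputable def lapC (k : ℕ) {n : ℕ} (E : Finset (Finset (Fin n)))
    (x : Fin n → ℂ) (i : Fin n) : ℂ :=
  (hdeg E i : ℂ) * x i ^ (k - 1) -
    ∑ e ∈ E.filter (fun e => i ∈ e), ∏ j ∈ e.erase i, x j

/-- Signless Laplacian tensor action `((D + A) x^{k-1})_i` over ℂ. -/
noncomputable def slapC (k : ℕ) {n : ℕ} (E : Finset (Finset (Fin n)))
    (x : Fin n → ℂ) (i : Fin n) : ℂ :=
  (hdeg E i : ℂ) * x i ^ (k - 1) +
    ∑ e ∈ E.filter (fun e => i ∈ e), ∏ j ∈ e.erase i, x j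

/-- Laplacian tensor action `((D - A) x^{k-1})_i` over ℝ. -/
noncomputable def lapR (k : ℕ) {n : ℕ} (E : Finset (Finset (Fin n)))
    (x : Fin n → ℝ) (i : Fin n) : ℝ :=
  (hdeg E i : ℝ) * x i ^ (k - 1) -
    ∑ e ∈ E.filter (fun e => i ∈ e), ∏ j ∈ e.erase i, x j

/-- Signless Laplacian tensor action `((D + A) x^{k-1})_i` over ℝ. -/
noncomputable def slapR (k : ℕ) {n : ℕ} (E : Finset (Finset (Fin n)))
    (x : Fin n → ℝ) (i : Fin n) : ℝ :=
  (hdeg E i : ℝ) * x i ^ (k - 1) +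
    ∑ e ∈ E.filter (fun e => i ∈ e), ∏ j ∈ e.erase i, x j

/-- The hypergraph with edge set `E` is connected: every pair of distinct vertices is
joined by a chain of edges with consecutive edges intersecting. -/
def HConnected {n : ℕ} (E : Finset (Finset (Fin n))) : Prop :=
  ∀ i j : Fin n, i ≠ j → ∃ m : ℕ, ∃ es : Fin (m + 1) → Finset (Fin n),
    (∀ r, es r ∈ E) ∧ i ∈ es 0 ∧ j ∈ es (Fin.last m) ∧
    ∀ r : Fin m, (es r.castSucc ∩ es r.succ).Nonempty

theorem stmt_16 {n : ℕ} (hn : 3 ≤ n)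
    (E : Finset (Finset (Fin n))) (hE : ∀ e ∈ E, e.card = 3)
    (x : Fin n → ℂ)
    (hx : ∀ i, x i = 1 ∨ x i = Complex.exp (2 * Real.pi * Complex.I / 3) ∨
      x i = Complex.exp (2 * Real.pi * Complex.I / 3) ^ 2) :
    (∀ i, lapC 3 E x i = 0) ↔ ∀ e ∈ E, ∏ j ∈ e, x j = 1 := by
  set ω := Complex.exp (2 * Real.pi * Complex.I / 3) with hω
  have hω3 : ω ^ 3 = 1 := by
    rw [hω, ← Complex.exp_nat_mul]
    rw [show ((3:ℕ):ℂ) * (2 * Real.pi * Complex.I / 3) = 2 * Real.pi * Complex.I by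
      push_cast; ring]
    exact Complex.exp_two_pi_mul_I
  have hωre : ω.re = -(1/2) := by
    rw [hω, show (2 * (Real.pi:ℂ) * Complex.I / 3) = ((2*Real.pi/3 : ℝ):ℂ) * Complex.I by
      push_cast; ring, Complex.exp_ofReal_mul_I_re,
      show (2*Real.pi/3) = Real.pi - Real.pi/3 by ring, Real.cos_pi_sub,
      Real.cos_pi_div_three]
  have hω2re : (ω^2).re = -(1/2) := by
    rw [hω, ← Complex.exp_nat_mul,
      show ((2:ℕ):ℂ) * (2 * Real.pi * Complex.I / 3) = ((4*Real.pi/3 : ℝ):ℂ) * Complex.I by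
      push_cast; ring, Complex.exp_ofReal_mul_I_re,
      show (4*Real.pi/3) = Real.pi + Real.pi/3 by ring, Real.cos_add,
      Real.cos_pi, Real.sin_pi, Real.cos_pi_div_three]
    ring
  set S : ℂ → Prop := fun z => z = 1 ∨ z = ω ∨ z = ω^2 with hS
  have hmul : ∀ a b : ℂ, S a → S b → S (a*b) := by
    intro a b ha hb
    rcases ha with rfl|rfl|rfl <;> rcases hb with rfl|rfl|rfl <;>
      first
        | (left; linear_combination)
        | (left; linear_combination hω3)
        | (right; left; linear_combination)
        | (right; left; linear_combination ω * hω3)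
        | (right; right; linear_combination)
  have hprod : ∀ e : Finset (Fin n), S (∏ j ∈ e, x j) := fun e =>
    Finset.prod_induction x S hmul (Or.inl rfl) (fun j _ => hx j)
  have hx3 : ∀ i, x i ^ 3 = 1 := by
    intro i
    rcases hx i with h|h|h <;> rw [h]
    · norm_num
    · exact hω3
    · linear_combination (ω^3 + 1) * hω3
  have hxne : ∀ i, x i ≠ 0 := by
    intro i h0
    have := hx3 i
    rw [h0] at this
    norm_num at this
  have hre : ∀ p : ℂ, S p → 0 ≤ (1-p).re ∧ ((1-p).re = 0 → p = 1) := by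
    intro p hp
    rcases hp with rfl|rfl|rfl
    · simp
    · constructor
      · simp [Complex.sub_re, hωre]; norm_num
      · intro h; simp [Complex.sub_re, hωre] at h; norm_num at h
    · constructor
      · simp [Complex.sub_re, hω2re]; norm_num
      · intro h; simp [Complex.sub_re, hω2re] at h; norm_num at h
  constructor
  · intro hlap e he
    obtain ⟨i, hi⟩ : e.Nonempty := Finset.card_pos.mp (by rw [hE e he]; norm_num)
    have h0 := hlap i
    rw [lapC] at h0
    have h1 : ∑ e' ∈ E.filter (fun e => i ∈ e), ∏ j ∈ e'.erase i, x j
        = (hdeg E i : ℂ) * x i ^ (3-1) := (sub_eq_zero.mp h0).symm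
    have hsum : ∑ e' ∈ E.filter (fun e => i ∈ e), ∏ j ∈ e', x j
        = ((E.filter (fun e => i ∈ e)).card : ℂ) := by
      calc ∑ e' ∈ E.filter (fun e => i ∈ e), ∏ j ∈ e', x j
          = ∑ e' ∈ E.filter (fun e => i ∈ e), (∏ j ∈ e'.erase i, x j) * x i := by
            refine Finset.sum_congr rfl fun e' he' => ?_
            rw [Finset.prod_erase_mul _ _ (Finset.mem_filter.mp he').2]
        _ = (∑ e' ∈ E.filter (fun e => i ∈ e), ∏ j ∈ e'.erase i, x j) * x i :=
            (Finset.sum_mul _ _ _).symm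
        _ = (hdeg E i : ℂ) * x i ^ (3-1) * x i := by rw [h1]
        _ = (hdeg E i : ℂ) * x i ^ 3 := by ring
        _ = ((E.filter (fun e => i ∈ e)).card : ℂ) := by
            rw [hx3 i, hdeg]; ring
    have hzero : ∑ e' ∈ E.filter (fun e => i ∈ e), (1 - ∏ j ∈ e', x j) = 0 := by
      rw [Finset.sum_sub_distrib, hsum, Finset.sum_const]
      simp
    have hre0 : ∑ e' ∈ E.filter (fun e => i ∈ e), (1 - ∏ j ∈ e', x j).re = 0 := by
      rw [← Complex.re_sum, hzero, Complex.zero_re]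
    have hall := (Finset.sum_eq_zero_iff_of_nonneg
      (fun e' _ => (hre _ (hprod e')).1)).mp hre0
    exact (hre _ (hprod e)).2 (hall e (Finset.mem_filter.mpr ⟨he, hi⟩))
  · intro hP i
    rw [lapC]
    have hcong : ∀ e' ∈ E.filter (fun e => i ∈ e), ∏ j ∈ e'.erase i, x j = x i ^ 2 := by
      intro e' he'
      have hmem := (Finset.mem_filter.mp he').2
      have hp : (∏ j ∈ e'.erase i, x j) * x i = 1 := by
        rw [Finset.prod_erase_mul _ _ hmem]
        exact hP e' (Finset.mem_filter.mp he').1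
      have hx2 : x i ^ 2 * x i = 1 := by rw [← hx3 i]; ring
      exact mul_right_cancel₀ (hxne i) (hp.trans hx2.symm)
    rw [Finset.sum_congr rfl hcong, Finset.sum_const]
    simp [hdeg, nsmul_eq_mul]
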